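/- Let λ ∈ ℝ, γ ∈ ℝ with γ ≠ λ, and let C₀ : [0,∞) → Matrix (Fin n) (Fin n) ℝ be continuous with ‖C₀(t)‖ → 0 as t → ∞, and let Ψ_γ be the fundamental matrix of the shifted system u̇ = ((λ − γ)I + C₀(t))u. Then: if γ > λ there exist K ≥ 1, α > 0 with ‖Ψ_γ(t)Ψ_γ(s)⁻¹‖ ≤ K e^{-α(t-s)} for all t ≥ s ≥ 0 (exponential dichotomy on [0,∞) with projector P = I); and if γ < λ there exist K ≥ 1, α > 0 with ‖Ψ_γ(t)Ψ_γ(s)⁻¹‖ ≤ K e^{-α(s-t)} for all s ≥ t ≥ 0 (exponential dichotomy on [0,∞) with projector P = 0). Consequently the exponential dichotomy spectrum on [0,∞) of u̇ = (λI + C₀(t))u is contained in {λ}. -/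

import Mathlib

open Real Set Matrix Filter

attribute [local instance] Matrix.linftyOpNormedRing Matrix.linftyOpNormedSpace

/-- Given a fundamental matrix `Ψ` of `u̇ = M(t)u`, the shifted system
`u̇ = (M(t) − γI)u` has fundamental matrix `Ψ_γ(t) = e^{-γt}Ψ(t)`.  This
predicate states that the shifted system has an exponential dichotomy on
`[0,∞)` (for some projection `P` and constants `K ≥ 1`, `α > 0`). -/
def ShiftedED (n : ℕ) (Ψ : ℝ → Matrix (Fin n) (Fin n) ℝ) (γ : ℝ) : Prop :=
  ∃ P : Matrix (Fin n) (Fin n) ℝ, P * P = P ∧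
    ∃ K ≥ (1:ℝ), ∃ α > (0:ℝ),
      (∀ s t : ℝ, 0 ≤ s → s ≤ t →
        ‖(exp (-γ * t) • Ψ t) * P * (exp (-γ * s) • Ψ s)⁻¹‖ ≤ K * exp (-α * (t - s))) ∧
      (∀ t s : ℝ, 0 ≤ t → t ≤ s →
        ‖(exp (-γ * t) • Ψ t) * (1 - P) * (exp (-γ * s) • Ψ s)⁻¹‖ ≤ K * exp (-α * (s - t)))

attribute [local instance] Matrix.linftyOpNormedAlgebra

set_option maxHeartbeats 1000000

namespace EDAux

variable {n : ℕ}

lemma norm_one_le : ‖(1 : Matrix (Fin n) (Fin n) ℝ)‖ ≤ 1 := by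
  rcases Nat.eq_zero_or_pos n with h | h
  · subst h
    have : (1 : Matrix (Fin 0) (Fin 0) ℝ) = 0 := Subsingleton.elim _ _
    rw [this, norm_zero]; norm_num
  · haveI : Nonempty (Fin n) := ⟨⟨0, h⟩⟩
    rw [norm_one]

lemma hasDerivAt_matrix_inv {F : ℝ → Matrix (Fin n) (Fin n) ℝ}
    {F' : Matrix (Fin n) (Fin n) ℝ} {x : ℝ}
    (hF : HasDerivAt F F' x) (hu : IsUnit (F x)) :
    HasDerivAt (fun y => (F y)⁻¹) (-((F x)⁻¹ * F' * (F x)⁻¹)) x := by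
  have h1 : HasDerivAt (fun y => Ring.inverse (F y))
      ((-(ContinuousLinearMap.mulLeftRight ℝ _ (↑hu.unit⁻¹) (↑hu.unit⁻¹))) F') x := by
    have := (hasFDerivAt_ringInverse (𝕜 := ℝ) hu.unit)
    rw [hu.unit_spec] at this
    exact this.comp_hasDerivAt x hF
  have e : (↑hu.unit⁻¹ : Matrix (Fin n) (Fin n) ℝ) = (F x)⁻¹ := by
    rw [Matrix.nonsing_inv_eq_ringInverse]
    conv_rhs => rw [← hu.unit_spec]
    rw [Ring.inverse_unit]
  have hfun : (fun y => Ring.inverse (F y)) = fun y => (F y)⁻¹ := by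
    funext y; rw [Matrix.nonsing_inv_eq_ringInverse]
  rw [hfun] at h1
  convert h1 using 1
  simp [e, Matrix.mul_assoc]

lemma gron {F F' : ℝ → Matrix (Fin n) (Fin n) ℝ} {c δ : ℝ} {a b : ℝ} (hab : a ≤ b)
    (hF : ∀ x, HasDerivAt F (F' x) x)
    (hbound : ∀ x ∈ Icc a b, ‖F' x‖ ≤ c * ‖F x‖) (hδ : ‖F a‖ ≤ δ) :
    ‖F b‖ ≤ δ * exp (c * (b - a)) := by
  have h := norm_le_gronwallBound_of_norm_deriv_right_le
    (f := F) (f' := F') (δ := δ) (K := c) (ε := 0) (a := a) (b := b)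
    (fun x _ => (hF x).continuousAt.continuousWithinAt)
    (fun x _ => (hF x).hasDerivWithinAt) hδ
    (fun x hx => by simpa using hbound x ⟨hx.1, hx.2.le⟩)
  have h2 := h b ⟨hab, le_rfl⟩
  rwa [gronwallBound_ε0] at h2

lemma smul_inv'' {c : ℝ} (hc : c ≠ 0) {A : Matrix (Fin n) (Fin n) ℝ} (hA : IsUnit A) :
    (c • A)⁻¹ = c⁻¹ • A⁻¹ := by
  apply Matrix.inv_eq_right_inv
  rw [Matrix.smul_mul, Matrix.mul_smul, smul_smul, mul_inv_cancel₀ hc, one_smul,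
    Matrix.mul_nonsing_inv _ ((Matrix.isUnit_iff_isUnit_det A).1 hA)]

lemma normE (Ψ : ℝ → Matrix (Fin n) (Fin n) ℝ) (hΨ_inv : ∀ t, IsUnit (Ψ t)) (γ t s : ℝ) :
    ‖(exp (-γ * t) • Ψ t) * (exp (-γ * s) • Ψ s)⁻¹‖
      = exp (-γ * t) * exp (γ * s) * ‖Ψ t * (Ψ s)⁻¹‖ := by
  rw [smul_inv'' (exp_ne_zero _) (hΨ_inv s), Matrix.smul_mul, Matrix.mul_smul, smul_smul,
    norm_smul]
  have h1 : (exp (-γ * s))⁻¹ = exp (γ * s) := by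
    rw [← Real.exp_neg]; ring_nf
  rw [h1, Real.norm_eq_abs, abs_of_pos (by positivity)]

lemma core (lam : ℝ) (C₀ : ℝ → Matrix (Fin n) (Fin n) ℝ)
    (hC₀_cont : ContinuousOn C₀ (Ici 0))
    (hC₀_lim : Tendsto (fun t : ℝ => ‖C₀ t‖) atTop (nhds 0))
    (Ψ : ℝ → Matrix (Fin n) (Fin n) ℝ)
    (hΨ_deriv : ∀ t : ℝ,
      HasDerivAt Ψ ((lam • (1 : Matrix (Fin n) (Fin n) ℝ) + C₀ t) * Ψ t) t)
    (hΨ_inv : ∀ t : ℝ, IsUnit (Ψ t))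
    (ε : ℝ) (hε : 0 < ε) :
    ∃ Kc ≥ (1:ℝ),
      (∀ s t : ℝ, 0 ≤ s → s ≤ t →
        ‖(exp (-lam * t) • Ψ t) * (exp (-lam * s) • Ψ s)⁻¹‖ ≤ Kc * exp (ε * (t - s))) ∧
      (∀ t s : ℝ, 0 ≤ t → t ≤ s →
        ‖(exp (-lam * t) • Ψ t) * (exp (-lam * s) • Ψ s)⁻¹‖ ≤ Kc * exp (ε * (s - t))) := by
  set Φ : ℝ → Matrix (Fin n) (Fin n) ℝ := fun t => exp (-lam * t) • Ψ t with hΦdef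
  -- derivative of Φ
  have hΦd : ∀ t, HasDerivAt Φ (C₀ t * Φ t) t := by
    intro t
    have hs : HasDerivAt (fun t : ℝ => exp (-lam * t)) (-lam * exp (-lam * t)) t := by
      have := (Real.hasDerivAt_exp (-lam * t)).comp t
        ((hasDerivAt_id t).const_mul (-lam))
      simpa [Function.comp_def, mul_comm] using this
    have := hs.smul (hΨ_deriv t)
    refine this.congr_deriv ?_
    symm
    simp only [hΦdef, add_mul, Matrix.smul_mul, one_mul]
    rw [smul_add, Matrix.mul_smul]
    module
  have hΦu : ∀ t, IsUnit (Φ t) := by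
    intro t
    rw [Matrix.isUnit_iff_isUnit_det, hΦdef]
    simp only [Matrix.det_smul]
    exact (IsUnit.pow _ (Ne.isUnit (exp_ne_zero _))).mul
      ((Matrix.isUnit_iff_isUnit_det _).1 (hΨ_inv t))
  have hΦmul : ∀ t, Φ t * (Φ t)⁻¹ = 1 := fun t =>
    Matrix.mul_nonsing_inv _ ((Matrix.isUnit_iff_isUnit_det _).1 (hΦu t))
  -- forward gronwall step
  have fwd : ∀ (A : Matrix (Fin n) (Fin n) ℝ) (c a b : ℝ), a ≤ b →
      (∀ x ∈ Icc a b, ‖C₀ x‖ ≤ c) →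
      ‖Φ b * A‖ ≤ ‖Φ a * A‖ * exp (c * (b - a)) := by
    intro A c a b hab hc
    refine gron hab (F := fun x => Φ x * A) (F' := fun x => C₀ x * (Φ x * A)) (fun x => ?_) (fun x hx => ?_) le_rfl
    · have := (hΦd x).mul_const A
      simp only [Matrix.mul_assoc] at this
      exact this
    · exact le_trans (Matrix.linfty_opNorm_mul _ _)
        (mul_le_mul_of_nonneg_right (hc x hx) (norm_nonneg _))
  -- backward gronwall step
  have bwd : ∀ (A : Matrix (Fin n) (Fin n) ℝ) (c a b : ℝ), a ≤ b →
      (∀ x ∈ Icc a b, ‖C₀ x‖ ≤ c) →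
      ‖A * (Φ b)⁻¹‖ ≤ ‖A * (Φ a)⁻¹‖ * exp (c * (b - a)) := by
    intro A c a b hab hc
    refine gron hab (F := fun x => A * (Φ x)⁻¹) (F' := fun x => -(A * (Φ x)⁻¹ * C₀ x)) (fun x => ?_) (fun x hx => ?_) le_rfl
    · have hinv := hasDerivAt_matrix_inv (hΦd x) (hΦu x)
      have := hinv.const_mul A
      have hsimp : (Φ x)⁻¹ * (C₀ x * Φ x) * (Φ x)⁻¹ = (Φ x)⁻¹ * C₀ x := by
        rw [← Matrix.mul_assoc ((Φ x)⁻¹) (C₀ x) (Φ x),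
          Matrix.mul_assoc ((Φ x)⁻¹ * C₀ x) (Φ x) ((Φ x)⁻¹), hΦmul x, Matrix.mul_one]
      refine this.congr_deriv ?_
      symm
      rw [hsimp, Matrix.mul_neg]
      simp [Matrix.mul_assoc]
    · rw [norm_neg]
      calc ‖A * (Φ x)⁻¹ * C₀ x‖ ≤ ‖A * (Φ x)⁻¹‖ * ‖C₀ x‖ := Matrix.linfty_opNorm_mul _ _
        _ ≤ ‖A * (Φ x)⁻¹‖ * c := mul_le_mul_of_nonneg_left (hc x hx) (norm_nonneg _)
        _ = c * ‖A * (Φ x)⁻¹‖ := mul_comm _ _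
  -- eventual smallness of C₀
  obtain ⟨T0, hT0⟩ := eventually_atTop.1 (hC₀_lim.eventually (gt_mem_nhds hε))
  set T := max T0 0 with hTdef
  have hTnn : (0:ℝ) ≤ T := le_max_right _ _
  have hsmall : ∀ x, T ≤ x → ‖C₀ x‖ ≤ ε := fun x hx =>
    (hT0 x (le_trans (le_max_left _ _) hx)).le
  -- global bound for ‖C₀‖ on [0, ∞)
  obtain ⟨B0, hB0⟩ := (isCompact_Icc (a := (0:ℝ)) (b := T)).exists_bound_of_continuousOn
    (hC₀_cont.mono (fun x hx => hx.1))
  set B := max B0 ε with hBdef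
  have hB : ∀ x, 0 ≤ x → ‖C₀ x‖ ≤ B := by
    intro x hx
    rcases le_total x T with h | h
    · exact le_trans (hB0 x ⟨hx, h⟩) (le_max_left _ _)
    · exact le_trans (hsmall x h) (le_max_right _ _)
  have hBnn : (0:ℝ) ≤ B := le_trans hε.le (le_max_right _ _)
  refine ⟨exp (B * T), one_le_exp (by positivity), ?_, ?_⟩
  · -- forward estimate
    intro s t hs hst
    rcases le_total t T with htT | hTt
    · have h1 := fwd ((Φ s)⁻¹) B s t hst (fun x hx => hB x (le_trans hs hx.1))
      rw [hΦmul s] at h1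
      have h1' : ‖Φ t * (Φ s)⁻¹‖ ≤ exp (B * T) := by
        refine h1.trans ?_
        calc ‖(1 : Matrix (Fin n) (Fin n) ℝ)‖ * exp (B * (t - s))
            ≤ 1 * exp (B * (t - s)) :=
              mul_le_mul_of_nonneg_right norm_one_le (exp_pos _).le
          _ = exp (B * (t - s)) := one_mul _
          _ ≤ exp (B * T) := exp_le_exp.2 (by nlinarith)
      calc ‖Φ t * (Φ s)⁻¹‖ ≤ exp (B * T) := h1'
        _ = exp (B * T) * 1 := (mul_one _).symm
        _ ≤ exp (B * T) * exp (ε * (t - s)) := by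
            gcongr
            exact one_le_exp (by nlinarith)
    · set m := max s T with hmdef
      have hsm : s ≤ m := le_max_left _ _
      have hmt : m ≤ t := max_le hst hTt
      have hTm : T ≤ m := le_max_right _ _
      have hmsT : m - s ≤ T := by
        have : m ≤ s + T := max_le (by linarith) (by linarith)
        linarith
      have h1 := fwd ((Φ s)⁻¹) B s m hsm (fun x hx => hB x (le_trans hs hx.1))
      rw [hΦmul s] at h1
      have h1' : ‖Φ m * (Φ s)⁻¹‖ ≤ exp (B * T) := by
        refine h1.trans ?_
        calc ‖(1 : Matrix (Fin n) (Fin n) ℝ)‖ * exp (B * (m - s))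
            ≤ 1 * exp (B * (m - s)) :=
              mul_le_mul_of_nonneg_right norm_one_le (exp_pos _).le
          _ = exp (B * (m - s)) := one_mul _
          _ ≤ exp (B * T) := exp_le_exp.2 (by nlinarith)
      have h2 := fwd ((Φ s)⁻¹) ε m t hmt (fun x hx => hsmall x (le_trans hTm hx.1))
      refine h2.trans ?_
      have : exp (ε * (t - m)) ≤ exp (ε * (t - s)) := exp_le_exp.2 (by nlinarith)
      exact mul_le_mul h1' this (exp_pos _).le (exp_pos _).le
  · -- backward estimate
    intro t s ht hts
    rcases le_total s T with hsT | hTs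
    · have h1 := bwd (Φ t) B t s hts (fun x hx => hB x (le_trans ht hx.1))
      rw [hΦmul t] at h1
      have h1' : ‖Φ t * (Φ s)⁻¹‖ ≤ exp (B * T) := by
        refine h1.trans ?_
        calc ‖(1 : Matrix (Fin n) (Fin n) ℝ)‖ * exp (B * (s - t))
            ≤ 1 * exp (B * (s - t)) :=
              mul_le_mul_of_nonneg_right norm_one_le (exp_pos _).le
          _ = exp (B * (s - t)) := one_mul _
          _ ≤ exp (B * T) := exp_le_exp.2 (by nlinarith)
      calc ‖Φ t * (Φ s)⁻¹‖ ≤ exp (B * T) := h1'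
        _ = exp (B * T) * 1 := (mul_one _).symm
        _ ≤ exp (B * T) * exp (ε * (s - t)) := by
            gcongr
            exact one_le_exp (by nlinarith)
    · set m := max t T with hmdef
      have htm : t ≤ m := le_max_left _ _
      have hms : m ≤ s := max_le hts hTs
      have hTm : T ≤ m := le_max_right _ _
      have hmtT : m - t ≤ T := by
        have : m ≤ t + T := max_le (by linarith) (by linarith)
        linarith
      have h1 := bwd (Φ t) B t m htm (fun x hx => hB x (le_trans ht hx.1))
      rw [hΦmul t] at h1
      have h1' : ‖Φ t * (Φ m)⁻¹‖ ≤ exp (B * T) := by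
        refine h1.trans ?_
        calc ‖(1 : Matrix (Fin n) (Fin n) ℝ)‖ * exp (B * (m - t))
            ≤ 1 * exp (B * (m - t)) :=
              mul_le_mul_of_nonneg_right norm_one_le (exp_pos _).le
          _ = exp (B * (m - t)) := one_mul _
          _ ≤ exp (B * T) := exp_le_exp.2 (by nlinarith)
      have h2 := bwd (Φ t) ε m s hms (fun x hx => hsmall x (le_trans hTm hx.1))
      refine h2.trans ?_
      have : exp (ε * (s - m)) ≤ exp (ε * (s - t)) := exp_le_exp.2 (by nlinarith)
      exact mul_le_mul h1' this (exp_pos _).le (exp_pos _).le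


variable {lam : ℝ} {C₀ : ℝ → Matrix (Fin n) (Fin n) ℝ}
  {Ψ : ℝ → Matrix (Fin n) (Fin n) ℝ}

lemma fwd_shift
    (hC₀_cont : ContinuousOn C₀ (Ici 0))
    (hC₀_lim : Tendsto (fun t : ℝ => ‖C₀ t‖) atTop (nhds 0))
    (hΨ_deriv : ∀ t : ℝ,
      HasDerivAt Ψ ((lam • (1 : Matrix (Fin n) (Fin n) ℝ) + C₀ t) * Ψ t) t)
    (hΨ_inv : ∀ t : ℝ, IsUnit (Ψ t)) {γ : ℝ} (hγ : lam < γ) :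
    ∃ K ≥ (1:ℝ), ∃ α > (0:ℝ), ∀ s t : ℝ, 0 ≤ s → s ≤ t →
      ‖(exp (-γ * t) • Ψ t) * (exp (-γ * s) • Ψ s)⁻¹‖ ≤ K * exp (-α * (t - s)) := by
  set ε := (γ - lam) / 2 with hεdef
  have hε : 0 < ε := by rw [hεdef]; linarith
  obtain ⟨Kc, hKc, hf, -⟩ := core lam C₀ hC₀_cont hC₀_lim Ψ hΨ_deriv hΨ_inv ε hε
  refine ⟨Kc, hKc, ε, hε, fun s t hs hst => ?_⟩
  have h1 := hf s t hs hst
  rw [normE Ψ hΨ_inv γ t s]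
  rw [normE Ψ hΨ_inv lam t s] at h1
  have key : exp (-γ * t) * exp (γ * s)
      = exp ((lam - γ) * (t - s)) * (exp (-lam * t) * exp (lam * s)) := by
    rw [← Real.exp_add, ← Real.exp_add, ← Real.exp_add]; congr 1; ring
  calc exp (-γ * t) * exp (γ * s) * ‖Ψ t * (Ψ s)⁻¹‖
      = exp ((lam - γ) * (t - s)) * (exp (-lam * t) * exp (lam * s) * ‖Ψ t * (Ψ s)⁻¹‖) := by
        rw [key]; ring
    _ ≤ exp ((lam - γ) * (t - s)) * (Kc * exp (ε * (t - s))) :=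
        mul_le_mul_of_nonneg_left h1 (exp_pos _).le
    _ = Kc * (exp ((lam - γ) * (t - s)) * exp (ε * (t - s))) := by ring
    _ = Kc * exp (-ε * (t - s)) := by
        rw [← Real.exp_add]; congr 1; rw [hεdef]; ring

lemma bwd_shift
    (hC₀_cont : ContinuousOn C₀ (Ici 0))
    (hC₀_lim : Tendsto (fun t : ℝ => ‖C₀ t‖) atTop (nhds 0))
    (hΨ_deriv : ∀ t : ℝ,
      HasDerivAt Ψ ((lam • (1 : Matrix (Fin n) (Fin n) ℝ) + C₀ t) * Ψ t) t)
    (hΨ_inv : ∀ t : ℝ, IsUnit (Ψ t)) {γ : ℝ} (hγ : γ < lam) :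
    ∃ K ≥ (1:ℝ), ∃ α > (0:ℝ), ∀ t s : ℝ, 0 ≤ t → t ≤ s →
      ‖(exp (-γ * t) • Ψ t) * (exp (-γ * s) • Ψ s)⁻¹‖ ≤ K * exp (-α * (s - t)) := by
  set ε := (lam - γ) / 2 with hεdef
  have hε : 0 < ε := by rw [hεdef]; linarith
  obtain ⟨Kc, hKc, -, hb⟩ := core lam C₀ hC₀_cont hC₀_lim Ψ hΨ_deriv hΨ_inv ε hε
  refine ⟨Kc, hKc, ε, hε, fun t s ht hts => ?_⟩
  have h1 := hb t s ht hts
  rw [normE Ψ hΨ_inv γ t s]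
  rw [normE Ψ hΨ_inv lam t s] at h1
  have key : exp (-γ * t) * exp (γ * s)
      = exp ((lam - γ) * (t - s)) * (exp (-lam * t) * exp (lam * s)) := by
    rw [← Real.exp_add, ← Real.exp_add, ← Real.exp_add]; congr 1; ring
  calc exp (-γ * t) * exp (γ * s) * ‖Ψ t * (Ψ s)⁻¹‖
      = exp ((lam - γ) * (t - s)) * (exp (-lam * t) * exp (lam * s) * ‖Ψ t * (Ψ s)⁻¹‖) := by
        rw [key]; ring
    _ ≤ exp ((lam - γ) * (t - s)) * (Kc * exp (ε * (s - t))) :=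
        mul_le_mul_of_nonneg_left h1 (exp_pos _).le
    _ = Kc * (exp ((lam - γ) * (t - s)) * exp (ε * (s - t))) := by ring
    _ = Kc * exp (-ε * (s - t)) := by
        rw [← Real.exp_add]; congr 1; rw [hεdef]; ring


end EDAux

theorem shifted_dichotomy_and_spectrum_in_singleton
    (n : ℕ)
    (lam γ : ℝ) (hγ : γ ≠ lam)
    (C₀ : ℝ → Matrix (Fin n) (Fin n) ℝ)
    (hC₀_cont : ContinuousOn C₀ (Ici 0))
    (hC₀_lim : Tendsto (fun t : ℝ => ‖C₀ t‖) atTop (nhds 0))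
    (Ψ : ℝ → Matrix (Fin n) (Fin n) ℝ)
    (hΨ_deriv : ∀ t : ℝ,
      HasDerivAt Ψ ((lam • (1 : Matrix (Fin n) (Fin n) ℝ) + C₀ t) * Ψ t) t)
    (hΨ0 : Ψ 0 = 1) (hΨ_inv : ∀ t : ℝ, IsUnit (Ψ t)) :
    (γ > lam → ∃ K ≥ (1:ℝ), ∃ α > (0:ℝ), ∀ s t : ℝ, 0 ≤ s → s ≤ t →
      ‖(exp (-γ * t) • Ψ t) * (exp (-γ * s) • Ψ s)⁻¹‖ ≤ K * exp (-α * (t - s))) ∧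
    (γ < lam → ∃ K ≥ (1:ℝ), ∃ α > (0:ℝ), ∀ t s : ℝ, 0 ≤ t → t ≤ s →
      ‖(exp (-γ * t) • Ψ t) * (exp (-γ * s) • Ψ s)⁻¹‖ ≤ K * exp (-α * (s - t))) ∧
    {γ' : ℝ | ¬ ShiftedED n Ψ γ'} ⊆ {lam} := by
  refine ⟨fun h => EDAux.fwd_shift hC₀_cont hC₀_lim hΨ_deriv hΨ_inv h,
    fun h => EDAux.bwd_shift hC₀_cont hC₀_lim hΨ_deriv hΨ_inv h, ?_⟩
  intro γ' hmem
  by_contra hne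
  rw [Set.mem_singleton_iff] at hne
  apply hmem
  rcases lt_or_gt_of_ne hne with hlt | hgt
  · -- γ' < lam : projector P = 0
    obtain ⟨K, hK, α, hα, hb⟩ := EDAux.bwd_shift hC₀_cont hC₀_lim hΨ_deriv hΨ_inv hlt
    refine ⟨0, by rw [mul_zero], K, hK, α, hα, fun s t hs hst => ?_, fun t s ht hts => ?_⟩
    · rw [Matrix.mul_zero, Matrix.zero_mul, norm_zero]
      positivity
    · rw [sub_zero, Matrix.mul_one]
      exact hb t s ht hts
  · -- γ' > lam : projector P = 1
    obtain ⟨K, hK, α, hα, hf⟩ := EDAux.fwd_shift hC₀_cont hC₀_lim hΨ_deriv hΨ_inv hgt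
    refine ⟨1, by rw [mul_one], K, hK, α, hα, fun s t hs hst => ?_, fun t s ht hts => ?_⟩
    · rw [Matrix.mul_one]
      exact hf s t hs hst
    · rw [sub_self, Matrix.mul_zero, Matrix.zero_mul, norm_zero]
      positivity
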